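/- Let X and C be finite nonempty sets, let α > 0, let γ ∈ [0,1), let r : X × C → ℝ, let P : X × C → (X → ℝ) be a stochastic kernel (P(x'|x,c) ≥ 0 and ∑_{x'} P(x'|x,c) = 1 for all (x,c)), and for each x' ∈ X let b(·|x') be a probability distribution on C. Define the operator T on functions Q : X × C → ℝ by (TQ)(x,c) = r(x,c) + γ·∑_{x'∈X} P(x'|x,c)·α·log(∑_{c'∈C} b(c'|x')·exp(Q(x',c')/α)). Then T is a γ-contraction in the supremum norm, i.e. max_{(x,c)} |(TQ)(x,c) − (TQ')(x,c)| ≤ γ·max_{(x,c)} |Q(x,c) − Q'(x,c)| for all Q, Q' : X × C → ℝ, and consequently T has a unique fixed point Q* satisfying TQ* = Q*. -/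

import Mathlib

/-- Log-sum-exp with weights is 1-Lipschitz in the sup norm. -/
lemma lse_lipschitz_aux (α : ℝ) (hα : 0 < α) {C : Type*} [Fintype C] [Nonempty C]
    (w : C → ℝ) (hw : ∀ c, 0 ≤ w c) (hws : ∑ c, w c = 1)
    (f g : C → ℝ) (M : ℝ) (hfg : ∀ c, |f c - g c| ≤ M) :
    |α * Real.log (∑ c, w c * Real.exp (f c / α)) -
      α * Real.log (∑ c, w c * Real.exp (g c / α))| ≤ M := by
  have hpos : ∀ h : C → ℝ, 0 < ∑ c, w c * Real.exp (h c / α) := by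
    intro h
    have : ∃ c, 0 < w c := by
      by_contra hc
      push_neg at hc
      have : ∑ c, w c = 0 := Finset.sum_eq_zero fun c _ => le_antisymm (hc c) (hw c)
      simp [hws] at this
    obtain ⟨c0, hc0⟩ := this
    refine Finset.sum_pos' (fun c _ => mul_nonneg (hw c) (Real.exp_pos _).le)
      ⟨c0, Finset.mem_univ _, mul_pos hc0 (Real.exp_pos _)⟩
  have key : ∀ f g : C → ℝ, (∀ c, f c - g c ≤ M) →
      α * Real.log (∑ c, w c * Real.exp (f c / α)) -
        α * Real.log (∑ c, w c * Real.exp (g c / α)) ≤ M := by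
    intro f g hle
    have hsum : ∑ c, w c * Real.exp (f c / α) ≤
        (∑ c, w c * Real.exp (g c / α)) * Real.exp (M / α) := by
      rw [Finset.sum_mul]
      refine Finset.sum_le_sum fun c _ => ?_
      rw [mul_assoc, ← Real.exp_add]
      refine mul_le_mul_of_nonneg_left (Real.exp_le_exp.2 ?_) (hw c)
      rw [← add_div, div_le_div_iff_of_pos_right hα]
      linarith [hle c]
    have hlog := Real.log_le_log (hpos f) hsum
    rw [Real.log_mul (hpos g).ne' (Real.exp_pos _).ne', Real.log_exp] at hlog
    have := mul_le_mul_of_nonneg_left hlog hα.le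
    rw [mul_add, mul_div_cancel₀ _ hα.ne'] at this
    linarith
  have h1 := key f g fun c => (abs_le.1 (hfg c)).2
  have h2 := key g f fun c => by linarith [(abs_le.1 (hfg c)).1]
  rw [abs_le]; constructor <;> linarith

/-- contraction of the KL-regularised evaluation operator:
the operator
`(TQ)(x,c) = r(x,c) + γ·∑_{x'} P(x'|x,c)·α·log ∑_{c'} b(c'|x')·exp(Q(x',c')/α)`
is a `γ`-contraction in the sup norm, hence has a unique fixed point. -/
theorem kl_eval_operator_contraction
    {X : Type*} {C : Type*} [Fintype X] [Fintype C] [Nonempty X] [Nonempty C]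
    (α : ℝ) (hα : 0 < α)
    (γ : ℝ) (hγ : γ ∈ Set.Ico (0 : ℝ) 1)
    (r : X × C → ℝ)
    (P : X × C → X → ℝ)
    (hPnonneg : ∀ p x', 0 ≤ P p x') (hPsum : ∀ p, ∑ x', P p x' = 1)
    (b : X → C → ℝ)
    (hbnonneg : ∀ x' c', 0 ≤ b x' c') (hbsum : ∀ x', ∑ c', b x' c' = 1)
    (T : (X × C → ℝ) → (X × C → ℝ))
    (hT : ∀ Q x c, T Q (x, c) = r (x, c) +
      γ * ∑ x', P (x, c) x' *
        (α * Real.log (∑ c', b x' c' * Real.exp (Q (x', c') / α)))) :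
    (∀ Q Q' : X × C → ℝ,
      Finset.univ.sup' Finset.univ_nonempty (fun p : X × C => |T Q p - T Q' p|) ≤
        γ * Finset.univ.sup' Finset.univ_nonempty (fun p : X × C => |Q p - Q' p|)) ∧
    (∃! Qstar : X × C → ℝ, T Qstar = Qstar) := by
  obtain ⟨hγ0, hγ1⟩ := hγ
  -- pointwise bound
  have main : ∀ (Q Q' : X × C → ℝ) (M : ℝ), (∀ p, |Q p - Q' p| ≤ M) →
      ∀ p : X × C, |T Q p - T Q' p| ≤ γ * M := by
    intro Q Q' M hM p
    obtain ⟨x, c⟩ := p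
    rw [hT Q x c, hT Q' x c]
    have hlse : ∀ x' : X,
        |P (x, c) x' * (α * Real.log (∑ c', b x' c' * Real.exp (Q (x', c') / α))) -
         P (x, c) x' * (α * Real.log (∑ c', b x' c' * Real.exp (Q' (x', c') / α)))|
          ≤ P (x, c) x' * M := by
      intro x'
      rw [← mul_sub, abs_mul, abs_of_nonneg (hPnonneg (x, c) x')]
      exact mul_le_mul_of_nonneg_left
        (lse_lipschitz_aux α hα (b x') (hbnonneg x') (hbsum x')
          (fun c' => Q (x', c')) (fun c' => Q' (x', c')) M (fun c' => hM (x', c')))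
        (hPnonneg (x, c) x')
    calc |(r (x, c) + γ * ∑ x', P (x, c) x' *
          (α * Real.log (∑ c', b x' c' * Real.exp (Q (x', c') / α)))) -
        (r (x, c) + γ * ∑ x', P (x, c) x' *
          (α * Real.log (∑ c', b x' c' * Real.exp (Q' (x', c') / α))))|
        = γ * |∑ x', (P (x, c) x' *
            (α * Real.log (∑ c', b x' c' * Real.exp (Q (x', c') / α))) -
          P (x, c) x' *
            (α * Real.log (∑ c', b x' c' * Real.exp (Q' (x', c') / α))))| := by
          rw [Finset.sum_sub_distrib]
          rw [show ∀ a b c : ℝ, (a + γ * b) - (a + γ * c) = γ * (b - c) from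
            fun a b c => by ring]
          rw [abs_mul, abs_of_nonneg hγ0]
      _ ≤ γ * ∑ x', P (x, c) x' * M := by
          refine mul_le_mul_of_nonneg_left ?_ hγ0
          exact (Finset.abs_sum_le_sum_abs _ _).trans
            (Finset.sum_le_sum fun x' _ => hlse x')
      _ = γ * M := by rw [← Finset.sum_mul, hPsum]; ring
  -- first part
  have part1 : ∀ Q Q' : X × C → ℝ,
      Finset.univ.sup' Finset.univ_nonempty (fun p : X × C => |T Q p - T Q' p|) ≤
        γ * Finset.univ.sup' Finset.univ_nonempty (fun p : X × C => |Q p - Q' p|) := by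
    intro Q Q'
    refine Finset.sup'_le _ _ fun p _ => ?_
    exact main Q Q' _ (fun q => Finset.le_sup' (fun p : X × C => |Q p - Q' p|)
      (Finset.mem_univ q)) p
  refine ⟨part1, ?_⟩
  -- contraction on the Pi metric space
  have hlip : LipschitzWith ⟨γ, hγ0⟩ T := by
    refine LipschitzWith.of_dist_le_mul fun Q Q' => ?_
    change dist (T Q) (T Q') ≤ γ * dist Q Q'
    refine (dist_pi_le_iff (mul_nonneg hγ0 dist_nonneg)).2 fun p => ?_
    rw [Real.dist_eq]
    exact main Q Q' (dist Q Q') (fun q => by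
      rw [← Real.dist_eq]; exact dist_le_pi_dist Q Q' q) p
  have hcontr : ContractingWith ⟨γ, hγ0⟩ T := ⟨by exact_mod_cast hγ1, hlip⟩
  exact ⟨hcontr.fixedPoint T, hcontr.fixedPoint_isFixedPt,
    fun Q hQ => hcontr.fixedPoint_unique hQ⟩
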